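/- arXiv:0901.1200 — 2 statements merged into one kernel-verified Lean document; each statement's English description precedes it below -/
import Mathlib

section
/- Let A₁₁, A₁₂, A₂₂ be Riccati data on a complex separable Hilbert space H with diag{A₁₁} − A₂₂ ≫ 0, and let (sₙ) be the successive approximations. Then the odd subsequence s₁, s₃, s₅, … is monotonically decreasing in the Loewner order (s₁ ≥ s₃ ≥ s₅ ≥ …) and has a strong operator limit: there exists a selfadjoint operator s̄ ∈ B(H) such that s_{2n+1}x → s̄x in H for every x ∈ H. -/
open MeasureTheory ContinuousLinearMap Filter
open scoped ENNReal NNReal Topology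

noncomputable section

/-- `ℓ²(H)`: the Hilbert space of square-summable sequences in `H`, indexed by `ℕ`
(index `k : ℕ` corresponds to the `(k+1)`-st entry in the paper's `1`-based indexing). -/
abbrev l2 (H : Type*) [NormedAddCommGroup H] [InnerProductSpace ℂ H] : Type _ :=
  lp (fun _ : ℕ => H) 2

variable {H : Type*} [NormedAddCommGroup H] [InnerProductSpace ℂ H]

lemma memℓp_diag (q : H →L[ℂ] H) (ξ : l2 H) : Memℓp (fun k => q (ξ k)) 2 := by
  have h2 : (0:ℝ) < (2 : ℝ≥0∞).toReal := by norm_num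
  apply memℓp_gen
  have hs : Summable (fun k => ‖q‖ ^ (2 : ℝ≥0∞).toReal * ‖ξ k‖ ^ (2 : ℝ≥0∞).toReal) :=
    ((lp.memℓp ξ).summable h2).mul_left _
  refine Summable.of_nonneg_of_le (fun k => ?_) (fun k => ?_) hs
  · positivity
  · rw [← Real.mul_rpow (norm_nonneg _) (norm_nonneg _)]
    exact Real.rpow_le_rpow (norm_nonneg _) (q.le_opNorm _) (by norm_num)

/-- `diag{q}`: the bounded block-diagonal operator on `ℓ²(H)` acting componentwise,
`(diag{q} ξ)ₖ = q (ξₖ)`. -/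
def diagOp (q : H →L[ℂ] H) : l2 H →L[ℂ] l2 H :=
  LinearMap.mkContinuous
    { toFun := fun ξ => ⟨fun k => q (ξ k), memℓp_diag q ξ⟩
      map_add' := fun ξ η => by ext k; simp [lp.coeFn_add]; rfl
      map_smul' := fun c ξ => by ext k; simp [lp.coeFn_smul] }
    ‖q‖
    (by
      intro ξ
      have h2 : (0:ℝ) < (2 : ℝ≥0∞).toReal := by norm_num
      refine lp.norm_le_of_tsum_le h2 (by positivity) ?_
      have hξ : ‖ξ‖ ^ (2 : ℝ≥0∞).toReal = ∑' k, ‖ξ k‖ ^ (2 : ℝ≥0∞).toReal :=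
        lp.norm_rpow_eq_tsum h2 ξ
      have hsum : Summable (fun k => ‖ξ k‖ ^ (2 : ℝ≥0∞).toReal) := (lp.memℓp ξ).summable h2
      calc ∑' k, ‖(fun k => q (ξ k)) k‖ ^ (2 : ℝ≥0∞).toReal
          ≤ ∑' k, ‖q‖ ^ (2 : ℝ≥0∞).toReal * ‖ξ k‖ ^ (2 : ℝ≥0∞).toReal := by
            refine Summable.tsum_le_tsum (fun k => ?_) ?_ (hsum.mul_left _)
            · rw [← Real.mul_rpow (norm_nonneg _) (norm_nonneg _)]
              exact Real.rpow_le_rpow (norm_nonneg _) (q.le_opNorm _) (by norm_num)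
            · refine Summable.of_nonneg_of_le (fun k => ?_) (fun k => ?_)
                (hsum.mul_left (‖q‖ ^ (2 : ℝ≥0∞).toReal))
              · positivity
              · rw [← Real.mul_rpow (norm_nonneg _) (norm_nonneg _)]
                exact Real.rpow_le_rpow (norm_nonneg _) (q.le_opNorm _) (by norm_num)
        _ = (‖q‖ * ‖ξ‖) ^ (2 : ℝ≥0∞).toReal := by
            rw [tsum_mul_left, ← hξ, Real.mul_rpow (norm_nonneg _) (norm_nonneg _)])

@[simp] lemma diagOp_apply (q : H →L[ℂ] H) (ξ : l2 H) (k : ℕ) :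
    (diagOp q ξ) k = q (ξ k) := rfl

/-- An operator is *strongly positive* (written `ρ ≫ 0` in the paper) if `δ • I ≤ ρ`
(Loewner order) for some `δ > 0`.  A strongly positive operator is boundedly invertible. -/
def StronglyPositive {E : Type*} [NormedAddCommGroup E] [InnerProductSpace ℂ E]
    [CompleteSpace E] (ρ : E →L[ℂ] E) : Prop :=
  ∃ δ : ℝ, 0 < δ ∧ δ • (1 : E →L[ℂ] E) ≤ ρ

variable [CompleteSpace H]

/-- The Riccati map `ℱ(s) = A₁₁ + A₁₂ (diag{s} − A₂₂)⁻¹ A₁₂*`.  Here `Ring.inverse` is the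
genuine inverse whenever `diag{s} − A₂₂` is boundedly invertible, which is guaranteed when
`diag{s} − A₂₂ ≫ 0`. -/
def riccatiMap (A11 : H →L[ℂ] H) (A12 : l2 H →L[ℂ] H) (A22 : l2 H →L[ℂ] l2 H)
    (s : H →L[ℂ] H) : H →L[ℂ] H :=
  A11 + A12 ∘L Ring.inverse (diagOp s - A22) ∘L ContinuousLinearMap.adjoint A12

/-- The successive approximations `s₀ = A₁₁`, `s_{n+1} = ℱ(sₙ)`. -/
def riccatiSeq (A11 : H →L[ℂ] H) (A12 : l2 H →L[ℂ] H) (A22 : l2 H →L[ℂ] l2 H) :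
    ℕ → (H →L[ℂ] H)
  | 0 => A11
  | n + 1 => riccatiMap A11 A12 A22 (riccatiSeq A11 A12 A22 n)


section Aux
open RCLike
variable {H : Type*} [NormedAddCommGroup H] [InnerProductSpace ℂ H] [CompleteSpace H]

omit [CompleteSpace H] in
lemma real_smul_one_eq' (δ : ℝ) : δ • (1:H →L[ℂ] H) = (δ:ℂ) • 1 :=
  real_smul_eq_coe_smul (K := ℂ) δ 1

lemma smul_one_nonneg' (δ : ℝ) (hδ : 0 ≤ δ) : (0:H →L[ℂ] H) ≤ δ • 1 := by
  rw [ContinuousLinearMap.nonneg_iff_isPositive, ContinuousLinearMap.isPositive_def']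
  constructor
  · rw [real_smul_one_eq', isSelfAdjoint_iff, star_smul, star_one]; norm_num
  · intro x
    rw [real_smul_one_eq']
    have h2 : RCLike.re (inner ℂ x x : ℂ) = ‖x‖^2 := inner_self_eq_norm_sq (𝕜 := ℂ) x
    simp only [ContinuousLinearMap.reApplyInnerSelf, ContinuousLinearMap.smul_apply,
      ContinuousLinearMap.one_apply, inner_smul_left, RCLike.conj_ofReal, RCLike.mul_re,
      RCLike.ofReal_re, RCLike.ofReal_im, zero_mul, sub_zero, inner_self_im, mul_zero, h2]
    positivity

lemma spos_inner' (δ : ℝ) (ρ : H →L[ℂ] H) (h : δ • (1:H →L[ℂ] H) ≤ ρ) (x : H) :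
    ‖x‖^2 * δ ≤ RCLike.re (inner ℂ (ρ x) x : ℂ) := by
  have h1 := ((ContinuousLinearMap.le_def _ _).mp h).2 x
  rw [real_smul_one_eq'] at h1
  have h2 : RCLike.re (inner ℂ x x : ℂ) = ‖x‖^2 := inner_self_eq_norm_sq (𝕜 := ℂ) x
  simp only [ContinuousLinearMap.reApplyInnerSelf, ContinuousLinearMap.sub_apply,
    ContinuousLinearMap.smul_apply, ContinuousLinearMap.one_apply, inner_sub_left,
    inner_smul_left, RCLike.conj_ofReal, Complex.conj_ofReal, map_sub, RCLike.mul_re,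
    inner_self_im, Complex.ofReal_re,
    RCLike.ofReal_re, RCLike.ofReal_im, zero_mul, sub_zero, mul_zero, h2] at h1
  have h3 : RCLike.re ((δ:ℂ)) = δ := by simp
  rw [h3] at h1
  nlinarith [h1]

lemma spos_nonneg' {ρ : H →L[ℂ] H} (h : StronglyPositive ρ) : 0 ≤ ρ := by
  obtain ⟨δ, hδ, hle⟩ := h
  exact (smul_one_nonneg' δ hδ.le).trans hle

lemma spos_of_le' {ρ σ : H →L[ℂ] H} (h : StronglyPositive ρ) (hle : ρ ≤ σ) :
    StronglyPositive σ := by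
  obtain ⟨δ, hδ, h1⟩ := h
  exact ⟨δ, hδ, h1.trans hle⟩

lemma spos_isUnit' {ρ : H →L[ℂ] H} (h : StronglyPositive ρ) : IsUnit ρ := by
  obtain ⟨δ, hδ, hle⟩ := h
  refine ContinuousLinearMap.isUnit_of_forall_le_norm_inner_map ρ (c := ⟨δ, hδ.le⟩)
    (by exact_mod_cast hδ) fun x => ?_
  calc ‖x‖^2 * ((⟨δ, hδ.le⟩ : NNReal) : ℝ) = ‖x‖^2 * δ := by norm_num
    _ ≤ RCLike.re (inner ℂ (ρ x) x : ℂ) := spos_inner' δ ρ hle x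
    _ ≤ ‖(inner ℂ (ρ x) x : ℂ)‖ := RCLike.re_le_norm _

lemma inverse_nonneg' {ρ : H →L[ℂ] H} (h : StronglyPositive ρ) : 0 ≤ Ring.inverse ρ := by
  have hu := spos_isUnit' h
  have h1 : Ring.inverse ρ = ↑hu.unit⁻¹ := by
    have := Ring.inverse_unit hu.unit
    rwa [hu.unit_spec] at this
  rw [h1]
  exact CFC.inv_nonneg_of_nonneg hu.unit (by rw [hu.unit_spec]; exact spos_nonneg' h)

lemma inverse_antitone' {ρ σ : H →L[ℂ] H} (hρ : StronglyPositive ρ) (hρσ : ρ ≤ σ) :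
    Ring.inverse σ ≤ Ring.inverse ρ := by
  have hσ := spos_of_le' hρ hρσ
  have huρ := spos_isUnit' hρ
  have huσ := spos_isUnit' hσ
  have h1 : Ring.inverse ρ = ↑huρ.unit⁻¹ := by
    have := Ring.inverse_unit huρ.unit
    rwa [huρ.unit_spec] at this
  have h2 : Ring.inverse σ = ↑huσ.unit⁻¹ := by
    have := Ring.inverse_unit huσ.unit
    rwa [huσ.unit_spec] at this
  rw [h1, h2]
  exact CStarAlgebra.inv_le_inv (a := huρ.unit) (b := huσ.unit)
    (by rw [huρ.unit_spec]; exact spos_nonneg' hρ)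
    (by rw [huρ.unit_spec, huσ.unit_spec]; exact hρσ)

set_option synthInstance.maxHeartbeats 1000000 in
set_option maxHeartbeats 1000000 in
lemma pos_norm_apply_sq_le' {P : H →L[ℂ] H} (hP : 0 ≤ P) (x : H) :
    ‖P x‖^2 ≤ ‖P‖ * RCLike.re (inner ℂ (P x) x : ℂ) := by
  set S := CFC.sqrt P with hS
  have hSnn : (0:H →L[ℂ] H) ≤ S := CFC.sqrt_nonneg (a := P)
  have hSsa : IsSelfAdjoint S := IsSelfAdjoint.of_nonneg hSnn
  have hSS : S * S = P := CFC.sqrt_mul_sqrt_self P hP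
  have happ : ∀ y, P y = S (S y) := by
    intro y; rw [← hSS]; rfl
  have hinner : RCLike.re (inner ℂ (P x) x : ℂ) = ‖S x‖^2 := by
    rw [happ, ← ContinuousLinearMap.adjoint_inner_right S, hSsa.adjoint_eq,
      inner_self_eq_norm_sq (𝕜 := ℂ)]
  have hnorm : ‖S‖^2 = ‖P‖ := by
    have h := CStarRing.norm_star_mul_self (x := S)
    rw [hSsa.star_eq] at h
    rw [← hSS, h, sq]
  have h1 : ‖P x‖ ≤ ‖S‖ * ‖S x‖ := by rw [happ]; exact S.le_opNorm _
  calc ‖P x‖^2 ≤ (‖S‖ * ‖S x‖)^2 := by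
        exact pow_le_pow_left₀ (norm_nonneg _) h1 2
    _ = ‖S‖^2 * ‖S x‖^2 := by ring
    _ = ‖P‖ * RCLike.re (inner ℂ (P x) x : ℂ) := by rw [hnorm, hinner]

omit [CompleteSpace H] in
lemma diagOp_sub' (p q : H →L[ℂ] H) : diagOp (p - q) = diagOp p - diagOp q := by
  ext ξ k
  simp [diagOp, LinearMap.mkContinuous, lp.coeFn_sub]; rfl

lemma isPositive_diag' {r : H →L[ℂ] H} (hr : r.IsPositive) : (diagOp r).IsPositive := by
  rw [ContinuousLinearMap.isPositive_def']
  constructor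
  · rw [ContinuousLinearMap.isSelfAdjoint_iff_isSymmetric]
    intro ξ η
    have hsym := ContinuousLinearMap.isSelfAdjoint_iff_isSymmetric.mp hr.isSelfAdjoint
    calc (inner ℂ (diagOp r ξ) η : ℂ) = ∑' k, (inner ℂ (r (ξ k)) (η k) : ℂ) :=
          lp.inner_eq_tsum _ _
      _ = ∑' k, (inner ℂ (ξ k) ((diagOp r η) k) : ℂ) := by
          congr 1; funext k; rw [diagOp_apply]; exact hsym (ξ k) (η k)
      _ = inner ℂ ξ (diagOp r η) := (lp.inner_eq_tsum _ _).symm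
  · intro ξ
    have hsum : Summable (fun k => (inner ℂ (r (ξ k)) (ξ k) : ℂ)) :=
      lp.summable_inner (𝕜 := ℂ) (diagOp r ξ) ξ
    have h1 : (inner ℂ (diagOp r ξ) ξ : ℂ) = ∑' k, (inner ℂ (r (ξ k)) (ξ k) : ℂ) :=
      lp.inner_eq_tsum _ _
    rw [ContinuousLinearMap.reApplyInnerSelf, h1, ← RCLike.reCLM_apply (K := ℂ),
      ContinuousLinearMap.map_tsum _ hsum]
    refine tsum_nonneg fun k => ?_
    simpa [ContinuousLinearMap.reApplyInnerSelf] using hr.2 (ξ k)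

lemma diag_le_diag' {p q : H →L[ℂ] H} (hpq : p ≤ q) : diagOp p ≤ diagOp q := by
  rw [ContinuousLinearMap.le_def] at hpq ⊢
  rw [← diagOp_sub']
  exact isPositive_diag' hpq

lemma gap_spos' (A11 : H →L[ℂ] H) (A22 : l2 H →L[ℂ] l2 H)
    (hgap : StronglyPositive (diagOp A11 - A22)) {s : H →L[ℂ] H} (hs : A11 ≤ s) :
    StronglyPositive (diagOp s - A22) := by
  refine spos_of_le' hgap ?_
  exact sub_le_sub_right (diag_le_diag' hs) A22

lemma riccati_ge' (A11 : H →L[ℂ] H) (A12 : l2 H →L[ℂ] H) (A22 : l2 H →L[ℂ] l2 H)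
    {s : H →L[ℂ] H} (hspos : StronglyPositive (diagOp s - A22)) :
    A11 ≤ riccatiMap A11 A12 A22 s := by
  have hX : (0 : H →L[ℂ] H) ≤
      A12 ∘L Ring.inverse (diagOp s - A22) ∘L ContinuousLinearMap.adjoint A12 := by
    rw [ContinuousLinearMap.nonneg_iff_isPositive]
    exact ((ContinuousLinearMap.nonneg_iff_isPositive _).mp (inverse_nonneg' hspos)).conj_adjoint
      A12
  calc A11 = A11 + 0 := by rw [add_zero]
    _ ≤ riccatiMap A11 A12 A22 s := add_le_add_right hX A11

lemma riccati_sa' {A11 : H →L[ℂ] H} (A12 : l2 H →L[ℂ] H) (A22 : l2 H →L[ℂ] l2 H)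
    (hA11sa : IsSelfAdjoint A11) {s : H →L[ℂ] H}
    (hspos : StronglyPositive (diagOp s - A22)) :
    IsSelfAdjoint (riccatiMap A11 A12 A22 s) := by
  refine hA11sa.add ?_
  exact (((ContinuousLinearMap.nonneg_iff_isPositive _).mp
    (inverse_nonneg' hspos)).conj_adjoint A12).isSelfAdjoint

lemma riccati_antitone' (A11 : H →L[ℂ] H) (A12 : l2 H →L[ℂ] H) (A22 : l2 H →L[ℂ] l2 H)
    {s t : H →L[ℂ] H} (hs : StronglyPositive (diagOp s - A22)) (hst : s ≤ t) :
    riccatiMap A11 A12 A22 t ≤ riccatiMap A11 A12 A22 s := by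
  have hd : diagOp s - A22 ≤ diagOp t - A22 := sub_le_sub_right (diag_le_diag' hst) A22
  have hinv := inverse_antitone' hs hd
  refine add_le_add_right ?_ A11
  rw [ContinuousLinearMap.le_def]
  have key : A12 ∘L Ring.inverse (diagOp s - A22) ∘L ContinuousLinearMap.adjoint A12 -
      A12 ∘L Ring.inverse (diagOp t - A22) ∘L ContinuousLinearMap.adjoint A12 =
      A12 ∘L (Ring.inverse (diagOp s - A22) - Ring.inverse (diagOp t - A22)) ∘L
        ContinuousLinearMap.adjoint A12 := by
    rw [ContinuousLinearMap.sub_comp, ContinuousLinearMap.comp_sub]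
  rw [key]
  have hpos : (0 : l2 H →L[ℂ] l2 H) ≤
      Ring.inverse (diagOp s - A22) - Ring.inverse (diagOp t - A22) := sub_nonneg.mpr hinv
  exact ((ContinuousLinearMap.nonneg_iff_isPositive _).mp hpos).conj_adjoint A12

lemma inner_re_le_of_le' {a b : H →L[ℂ] H} (h : a ≤ b) (x : H) :
    RCLike.re (inner ℂ (a x) x : ℂ) ≤ RCLike.re (inner ℂ (b x) x : ℂ) := by
  have h1 := ((ContinuousLinearMap.le_def _ _).mp h).2 x
  simp only [ContinuousLinearMap.reApplyInnerSelf, ContinuousLinearMap.sub_apply,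
    inner_sub_left, map_sub] at h1
  linarith

end Aux

end
/-- **Lemma 2.2 (part 2).**  The odd successive approximations `s₁, s₃, s₅, …` decrease
monotonically in the Loewner order and converge strongly to a selfadjoint operator. -/
theorem riccati_odd_iterates_antitone_and_strongly_convergent
    {H : Type*} [NormedAddCommGroup H] [InnerProductSpace ℂ H] [CompleteSpace H]
    [TopologicalSpace.SeparableSpace H]
    (A11 : H →L[ℂ] H) (A12 : l2 H →L[ℂ] H) (A22 : l2 H →L[ℂ] l2 H)
    (hA11sa : IsSelfAdjoint A11) (hA22sa : IsSelfAdjoint A22)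
    (hgap : StronglyPositive (diagOp A11 - A22)) :
    Antitone (fun n => riccatiSeq A11 A12 A22 (2 * n + 1)) ∧
      ∃ sbar : H →L[ℂ] H, IsSelfAdjoint sbar ∧
        ∀ x : H, Filter.Tendsto (fun n => riccatiSeq A11 A12 A22 (2 * n + 1) x)
          Filter.atTop (𝓝 (sbar x)) := by
  have hstep : ∀ k, riccatiSeq A11 A12 A22 (k+1) =
      riccatiMap A11 A12 A22 (riccatiSeq A11 A12 A22 k) := fun k => rfl
  set s := riccatiSeq A11 A12 A22 with hs
  have hbase : ∀ n, A11 ≤ s n ∧ StronglyPositive (diagOp (s n) - A22) := by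
    intro n
    induction n with
    | zero => exact ⟨le_refl _, hgap⟩
    | succ k ih =>
      have h1 : A11 ≤ s (k+1) := by rw [hstep]; exact riccati_ge' A11 A12 A22 ih.2
      exact ⟨h1, gap_spos' A11 A22 hgap h1⟩
  have hsa : ∀ n, IsSelfAdjoint (s n) := by
    intro n
    cases n with
    | zero => exact hA11sa
    | succ k => rw [hstep]; exact riccati_sa' A12 A22 hA11sa (hbase k).2
  have heven : ∀ n, s (2*n) ≤ s (2*n+2) := by
    intro n
    induction n with
    | zero =>
      have h0 : s (2*0) = A11 := rfl
      rw [h0, show (2:ℕ)*0+2 = 2 by norm_num]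
      exact (hbase 2).1
    | succ k ih =>
      have h1 : s (2*k+3) ≤ s (2*k+1) := by
        have h := riccati_antitone' A11 A12 A22 (hbase (2*k)).2 ih
        rw [← hstep (2*k+2), ← hstep (2*k)] at h
        rw [show 2*k+2+1 = 2*k+3 by omega] at h
        exact h
      have h2 := riccati_antitone' A11 A12 A22 (hbase (2*k+3)).2 h1
      rw [← hstep (2*k+1), ← hstep (2*k+3)] at h2
      rw [show 2*k+1+1 = 2*(k+1) by omega, show 2*k+3+1 = 2*(k+1)+2 by omega] at h2
      exact h2
  have hodd : ∀ n, s (2*(n+1)+1) ≤ s (2*n+1) := by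
    intro n
    have h := riccati_antitone' A11 A12 A22 (hbase (2*n)).2 (heven n)
    rw [← hstep (2*n+2), ← hstep (2*n)] at h
    rw [show 2*n+2+1 = 2*(n+1)+1 by omega] at h
    exact h
  have hmono : Antitone (fun n => s (2*n+1)) := antitone_nat_of_succ_le hodd
  refine ⟨hmono, ?_⟩
  set T : ℕ → (H →L[ℂ] H) := fun n => s (2*n+1) with hT
  have hlb : ∀ n, A11 ≤ T n := fun n => (hbase (2*n+1)).1
  set M : ℝ := ‖T 0 - A11‖ with hM
  have hM0 : 0 ≤ M := norm_nonneg _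
  have hdiff_nonneg : ∀ {m n : ℕ}, m ≤ n → (0:H →L[ℂ] H) ≤ T m - T n :=
    fun h => sub_nonneg.mpr (hmono h)
  have hnorm_bound : ∀ {m n : ℕ}, m ≤ n → ‖T m - T n‖ ≤ M := by
    intro m n h
    have h2 : T m - T n ≤ T 0 - A11 := sub_le_sub (hmono (Nat.zero_le m)) (hlb n)
    exact CStarAlgebra.norm_le_norm_of_nonneg_of_le (hdiff_nonneg h) h2
  have hcauchy : ∀ x : H, CauchySeq (fun n => T n x) := by
    intro x
    set g : ℕ → ℝ := fun n => RCLike.re (inner ℂ (T n x) x : ℂ) with hg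
    have hganti : Antitone g := fun m n h => inner_re_le_of_le' (hmono h) x
    have hbdd : BddBelow (Set.range g) := by
      refine ⟨RCLike.re (inner ℂ (A11 x) x : ℂ), ?_⟩
      rintro _ ⟨n, rfl⟩
      exact inner_re_le_of_le' (hlb n) x
    have hcau_g : CauchySeq g := (tendsto_atTop_ciInf hganti hbdd).cauchySeq
    have hkey : ∀ m n : ℕ, m ≤ n → ‖T m x - T n x‖^2 ≤ (M+1) * (g m - g n) := by
      intro m n h
      have hpos := hdiff_nonneg h
      have h1 := pos_norm_apply_sq_le' hpos x
      have h3 : RCLike.re (inner ℂ (T m x - T n x) x : ℂ) = g m - g n := by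
        simp [hg, inner_sub_left]
      have h4 : 0 ≤ RCLike.re (inner ℂ (T m x - T n x) x : ℂ) := by
        have h5 := ((ContinuousLinearMap.le_def _ _).mp hpos).2 x
        simpa [ContinuousLinearMap.reApplyInnerSelf, ContinuousLinearMap.sub_apply, inner_sub_left] using h5
      have h5 : ‖T m - T n‖ ≤ M := hnorm_bound h
      have h1' : ‖T m x - T n x‖^2 ≤ ‖T m - T n‖ * RCLike.re (inner ℂ (T m x - T n x) x : ℂ) := h1
      rw [h3] at h1' h4
      nlinarith [h1', h4, h5]
    rw [Metric.cauchySeq_iff']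
    intro ε hε
    obtain ⟨N, hN⟩ := Metric.cauchySeq_iff'.mp hcau_g (ε^2/(M+1)) (by positivity)
    refine ⟨N, fun n hn => ?_⟩
    have h1 := hkey N n hn
    have h2 := hN n hn
    rw [Real.dist_eq] at h2
    have h3 : g N - g n ≤ |g n - g N| := by rw [abs_sub_comm]; exact le_abs_self _
    have hM1 : (0:ℝ) < M + 1 := by linarith
    have habs : |g n - g N| < ε^2/(M+1) := h2
    have hsq : ‖T N x - T n x‖^2 < ε^2 := by
      calc ‖T N x - T n x‖^2 ≤ (M+1)*(g N - g n) := h1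
        _ ≤ (M+1)*|g n - g N| := by nlinarith
        _ < (M+1)*(ε^2/(M+1)) := by nlinarith
        _ = ε^2 := by field_simp
    have h4 : ‖T n x - T N x‖ < ε := by
      rw [norm_sub_rev]
      exact lt_of_pow_lt_pow_left₀ 2 hε.le hsq
    rw [dist_eq_norm]
    exact h4
  have hlim : ∀ x : H, ∃ y : H, Filter.Tendsto (fun n => T n x) Filter.atTop (𝓝 y) :=
    fun x => cauchySeq_tendsto_of_complete (hcauchy x)
  choose fbar hfbar using hlim
  have hpi : Filter.Tendsto (fun n x => T n x) Filter.atTop (𝓝 fbar) :=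
    tendsto_pi_nhds.mpr hfbar
  let sbar : H →L[ℂ] H := continuousLinearMapOfTendsto T hpi
  have happly : ∀ x, sbar x = fbar x := fun x => rfl
  refine ⟨sbar, ?_, ?_⟩
  · rw [ContinuousLinearMap.isSelfAdjoint_iff_isSymmetric]
    intro x y
    have h1 : Filter.Tendsto (fun n => (inner ℂ (T n x) y : ℂ)) Filter.atTop
        (𝓝 (inner ℂ (fbar x) y)) := Filter.Tendsto.inner (hfbar x) tendsto_const_nhds
    have h2 : Filter.Tendsto (fun n => (inner ℂ x (T n y) : ℂ)) Filter.atTop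
        (𝓝 (inner ℂ x (fbar y))) := Filter.Tendsto.inner tendsto_const_nhds (hfbar y)
    have heq : (fun n => (inner ℂ (T n x) y : ℂ)) = fun n => (inner ℂ x (T n y) : ℂ) := by
      funext n
      exact ContinuousLinearMap.isSelfAdjoint_iff_isSymmetric.mp (hsa (2*n+1)) x y
    rw [heq] at h1
    exact tendsto_nhds_unique h1 h2
  · intro x
    exact hfbar x
end

section
/- Let A₁₁, A₁₂, A₂₂ be Riccati data on a complex separable Hilbert space H, with δ > 0 such that diag{A₁₁} − A₂₂ ≥ δ·I. Define the sequence s₀ = A₁₁ and s_{n+1} = A₁₁ + A₁₂(diag{sₙ} − A₂₂)⁻¹A₁₂* whenever the inverse exists. Then for every n the operator sₙ is well defined and selfadjoint, sₙ ≥ A₁₁ = s₀, and diag{sₙ} − A₂₂ ≥ δ·I (in particular diag{sₙ} − A₂₂ is strongly positive, hence boundedly invertible), so the recursion never breaks down. -/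
open MeasureTheory ContinuousLinearMap Filter
open scoped ENNReal NNReal Topology

section RiccatiAux

open ContinuousLinearMap

variable {E : Type*} [NormedAddCommGroup E] [InnerProductSpace ℂ E] [CompleteSpace E]

local notation "⟪" x ", " y "⟫" => @inner ℂ _ _ x y

lemma riccati_smul_one_nonneg {δ : ℝ} (hδ : 0 ≤ δ) : (0 : E →L[ℂ] E) ≤ δ • 1 := by
  rw [ContinuousLinearMap.nonneg_iff_isPositive]
  constructor
  · rw [← ContinuousLinearMap.isSelfAdjoint_iff_isSymmetric, IsSelfAdjoint, star_smul]; simp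
  · intro x
    simp only [ContinuousLinearMap.reApplyInnerSelf, ContinuousLinearMap.smul_apply,
      ContinuousLinearMap.one_apply]
    rw [RCLike.real_smul_eq_coe_smul (K := ℂ), inner_smul_left]
    simp only [RCLike.conj_ofReal, RCLike.mul_re, RCLike.ofReal_re, RCLike.ofReal_im,
      zero_mul, sub_zero]
    exact mul_nonneg hδ inner_self_nonneg

lemma riccati_isUnit_smul_one {δ : ℝ} (hδ : δ ≠ 0) : IsUnit ((δ : ℝ) • (1 : E →L[ℂ] E)) := by
  refine ⟨⟨δ • 1, δ⁻¹ • 1, ?_, ?_⟩, rfl⟩ <;>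
    simp [smul_smul, mul_inv_cancel₀ hδ, inv_mul_cancel₀ hδ]

lemma riccati_isUnit_of_coercive {T : E →L[ℂ] E} {δ : ℝ} (hδ : 0 < δ)
    (h : δ • (1 : E →L[ℂ] E) ≤ T) : IsUnit T :=
  CStarAlgebra.isUnit_of_le _ h
    ((riccati_isUnit_smul_one hδ.ne').isStrictlyPositive (riccati_smul_one_nonneg hδ.le))

lemma riccati_inverse_nonneg {T : E →L[ℂ] E} (hu : IsUnit T) (h : (0 : E →L[ℂ] E) ≤ T) :
    (0 : E →L[ℂ] E) ≤ Ring.inverse T := by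
  rw [ContinuousLinearMap.nonneg_iff_isPositive] at h ⊢
  constructor
  · rw [← ContinuousLinearMap.isSelfAdjoint_iff_isSymmetric, IsSelfAdjoint, ← Ring.inverse_star, h.isSelfAdjoint.star_eq]
  · intro y
    have hy : T (Ring.inverse T y) = y := by
      have h1 := Ring.mul_inverse_cancel T hu
      calc T (Ring.inverse T y) = (T * Ring.inverse T) y := rfl
        _ = y := by rw [h1]; rfl
    simp only [ContinuousLinearMap.reApplyInnerSelf]
    nth_rewrite 2 [← hy]
    rw [inner_re_symm (𝕜 := ℂ)]
    exact h.2 _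

lemma diagOp_adjoint (q : E →L[ℂ] E) :
    ContinuousLinearMap.adjoint (diagOp q) = diagOp (ContinuousLinearMap.adjoint q) := by
  symm
  rw [ContinuousLinearMap.eq_adjoint_iff]
  intro ξ η
  rw [lp.inner_eq_tsum, lp.inner_eq_tsum]
  exact tsum_congr fun k => ContinuousLinearMap.adjoint_inner_left q _ _

lemma diagOp_isSelfAdjoint {q : E →L[ℂ] E} (hq : IsSelfAdjoint q) :
    IsSelfAdjoint (diagOp q) := by
  rw [IsSelfAdjoint, ContinuousLinearMap.star_eq_adjoint, diagOp_adjoint,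
    hq.adjoint_eq]

omit [CompleteSpace E] in
lemma diagOp_add (a b : E →L[ℂ] E) : diagOp (a + b) = diagOp a + diagOp b := by
  ext ξ k
  simp [lp.coeFn_add]

lemma diagOp_nonneg {p : E →L[ℂ] E} (hp : (0 : E →L[ℂ] E) ≤ p) :
    (0 : l2 E →L[ℂ] l2 E) ≤ diagOp p := by
  rw [ContinuousLinearMap.nonneg_iff_isPositive] at hp ⊢
  refine ⟨ContinuousLinearMap.isSelfAdjoint_iff_isSymmetric.mp (diagOp_isSelfAdjoint hp.isSelfAdjoint), fun ξ => ?_⟩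
  simp only [ContinuousLinearMap.reApplyInnerSelf]
  have hsum : Summable fun k => ⟪(diagOp p ξ) k, ξ k⟫ := lp.summable_inner _ _
  rw [lp.inner_eq_tsum]
  have h2 : RCLike.re (∑' k, ⟪(diagOp p ξ) k, ξ k⟫) = ∑' k, RCLike.re ⟪(diagOp p ξ) k, ξ k⟫ :=
    RCLike.reCLM.map_tsum hsum
  rw [h2]
  exact tsum_nonneg fun k => hp.2 (ξ k)

end RiccatiAux
/-- **Well-definedness of the successive approximations.**  If `diag{A₁₁} − A₂₂ ≥ δ·I` with
`δ > 0`, then every iterate `sₙ` is well defined and selfadjoint, `sₙ ≥ A₁₁ = s₀`, and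
`diag{sₙ} − A₂₂ ≥ δ·I`; in particular `diag{sₙ} − A₂₂` is strongly positive, hence boundedly
invertible, and the recursion never breaks down. -/
theorem riccati_seq_well_defined
    {H : Type*} [NormedAddCommGroup H] [InnerProductSpace ℂ H] [CompleteSpace H]
    [TopologicalSpace.SeparableSpace H]
    (A11 : H →L[ℂ] H) (A12 : l2 H →L[ℂ] H) (A22 : l2 H →L[ℂ] l2 H)
    (hA11sa : IsSelfAdjoint A11) (hA22sa : IsSelfAdjoint A22)
    (δ : ℝ) (hδ : 0 < δ) (hgap : δ • (1 : l2 H →L[ℂ] l2 H) ≤ diagOp A11 - A22) :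
    ∀ n : ℕ,
      IsSelfAdjoint (riccatiSeq A11 A12 A22 n) ∧
      A11 ≤ riccatiSeq A11 A12 A22 n ∧
      δ • (1 : l2 H →L[ℂ] l2 H) ≤ diagOp (riccatiSeq A11 A12 A22 n) - A22 ∧
      IsUnit (diagOp (riccatiSeq A11 A12 A22 n) - A22) := by
  intro n
  induction n with
  | zero =>
    exact ⟨hA11sa, le_refl _, hgap, riccati_isUnit_of_coercive hδ hgap⟩
  | succ n ih =>
    obtain ⟨hsa, hge, hgapn, hu⟩ := ih
    set s := riccatiSeq A11 A12 A22 n with hs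
    set P := A12 ∘L Ring.inverse (diagOp s - A22) ∘L ContinuousLinearMap.adjoint A12 with hPdef
    have hTnn : (0 : l2 H →L[ℂ] l2 H) ≤ diagOp s - A22 :=
      le_trans (riccati_smul_one_nonneg hδ.le) hgapn
    have hInv := riccati_inverse_nonneg hu hTnn
    have hP : P.IsPositive :=
      ((ContinuousLinearMap.nonneg_iff_isPositive _).mp hInv).conj_adjoint A12
    have hPnn : (0 : H →L[ℂ] H) ≤ P := (ContinuousLinearMap.nonneg_iff_isPositive _).mpr hP
    have hseq : riccatiSeq A11 A12 A22 (n + 1) = A11 + P := rfl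
    have hgapeq : diagOp (riccatiSeq A11 A12 A22 (n + 1)) - A22
        = (diagOp A11 - A22) + diagOp P := by
      rw [hseq, diagOp_add]; abel
    have hgap' : δ • (1 : l2 H →L[ℂ] l2 H) ≤ diagOp (riccatiSeq A11 A12 A22 (n + 1)) - A22 := by
      rw [hgapeq]
      exact le_trans hgap (le_add_of_nonneg_right (diagOp_nonneg hPnn))
    refine ⟨?_, ?_, hgap', riccati_isUnit_of_coercive hδ hgap'⟩
    · rw [hseq]; exact hA11sa.add hP.isSelfAdjoint
    · rw [hseq]; exact le_add_of_nonneg_right hPnn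
end
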